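/- Let a, b, c be real numbers with a > 0, b > 0, c > 0. Then every complex root k of the equation -a*i*k = b*k^2 - c has strictly negative imaginary part; indeed the roots are k = (-i*a ± sqrt(4*b*c - a^2))/(2*b). -/

import Mathlib

/-- Every complex root `k` of `-a i k = b k² - c` (with `a, b, c > 0` real) has
strictly negative imaginary part, and the roots are `k = (-i a ± √(4bc - a²))/(2b)`,
where the square root is a complex square root `s` with `s² = 4bc - a²`. -/
theorem stmt_0 (a b c : ℝ) (ha : 0 < a) (hb : 0 < b) (hc : 0 < c) (k : ℂ)
    (hroot : -(a : ℂ) * Complex.I * k = (b : ℂ) * k ^ 2 - (c : ℂ)) :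
    k.im < 0 ∧
      ∃ s : ℂ, s ^ 2 = 4 * (b : ℂ) * (c : ℂ) - (a : ℂ) ^ 2 ∧
        (k = (-Complex.I * (a : ℂ) + s) / (2 * (b : ℂ)) ∨
         k = (-Complex.I * (a : ℂ) - s) / (2 * (b : ℂ))) := by
  have hb' : (b : ℂ) ≠ 0 := by exact_mod_cast hb.ne'
  constructor
  · -- imaginary part negative
    have h1 := congrArg Complex.re hroot
    have h2 := congrArg Complex.im hroot
    simp [Complex.mul_re, Complex.mul_im, pow_two] at h1 h2
    by_contra h
    push_neg at h
    have hx0 : k.re * (a + 2 * b * k.im) = 0 := by linear_combination -h2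
    have hpos : 0 < a + 2 * b * k.im := by nlinarith [mul_nonneg hb.le h]
    have hx : k.re = 0 := by
      rcases mul_eq_zero.mp hx0 with hx | hx
      · exact hx
      · exact absurd hx hpos.ne'
    rw [hx] at h1
    nlinarith [mul_nonneg ha.le h, mul_nonneg hb.le (mul_nonneg h h)]
  · refine ⟨2 * b * k + Complex.I * a, ?_, Or.inl ?_⟩
    · linear_combination (-4*(b:ℂ)) * hroot + (a:ℂ)^2 * Complex.I_sq
    · field_simp
      ring
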